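/- Let A, B, C > 0 with A + B ≠ C, and set g₁ = B/(A+B−C), g₂ = (BC + A(C − (A+B)))/((A+B)(A+B−C)). Define the absorption probability p(t) = 1 − g₁ e^{−Ct} + g₂ e^{−(A+B)t}. Then p(0) = 0, p is nondecreasing on [0, ∞), and p(t) → 1 as t → ∞; i.e. p is the cumulative distribution function of the duration of reactive trajectories, and absorption in state 2 is certain. -/

import Mathlib

open Real Filter

/-- The absorption probability of the three-level model,
`p(t) = 1 − g₁ e^{−Ct} + g₂ e^{−(A+B)t}`, satisfies `p(0) = 0`, is nondecreasing
on `[0,∞)`, and tends to `1` as `t → ∞`: it is the cumulative distribution function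
of the duration of reactive trajectories, and absorption in state 2 is certain. -/
theorem three_level_absorption_cdf (A B C : ℝ)
    (hA : 0 < A) (hB : 0 < B) (hC : 0 < C) (hABC : A + B ≠ C)
    (g₁ g₂ : ℝ)
    (hg₁ : g₁ = B / (A + B - C))
    (hg₂ : g₂ = (B * C + A * (C - (A + B))) / ((A + B) * (A + B - C)))
    (p : ℝ → ℝ)
    (hp : p = fun t => 1 - g₁ * Real.exp (-C * t) + g₂ * Real.exp (-(A + B) * t)) :
    p 0 = 0 ∧
    MonotoneOn p (Set.Ici (0 : ℝ)) ∧
    Tendsto p atTop (nhds 1) := by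
  have hD : A + B - C ≠ 0 := sub_ne_zero.mpr hABC
  have hS : (0:ℝ) < A + B := by linarith
  have hSne : A + B ≠ 0 := ne_of_gt hS
  constructor
  · simp only [hp, mul_zero, Real.exp_zero, mul_one]
    rw [hg₁, hg₂]
    field_simp
    ring
  constructor
  · -- monotonicity via nonnegative derivative
    have hderiv : ∀ t : ℝ, HasDerivAt p
        (g₁ * C * Real.exp (-C * t) - g₂ * (A + B) * Real.exp (-(A + B) * t)) t := by
      intro t
      have h1 : HasDerivAt (fun t : ℝ => Real.exp (-C * t)) (Real.exp (-C * t) * (-C)) t := by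
        simpa using ((hasDerivAt_id t).const_mul (-C)).exp
      have h2 : HasDerivAt (fun t : ℝ => Real.exp (-(A + B) * t))
          (Real.exp (-(A + B) * t) * (-(A + B))) t := by
        simpa using ((hasDerivAt_id t).const_mul (-(A + B))).exp
      have h := ((hasDerivAt_const t (1:ℝ)).sub (h1.const_mul g₁)).add (h2.const_mul g₂)
      rw [hp]
      refine h.congr_deriv ?_
      ring
    have hdiff : Differentiable ℝ p := fun t => (hderiv t).differentiableAt
    have hnonneg : ∀ t ∈ interior (Set.Ici (0:ℝ)), 0 ≤ deriv p t := by
      intro t ht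
      rw [interior_Ici] at ht
      have ht0 : (0:ℝ) ≤ t := le_of_lt ht
      rw [(hderiv t).deriv]
      have key : g₁ * C * Real.exp (-C * t) - g₂ * (A + B) * Real.exp (-(A + B) * t)
          = B * C * (Real.exp (-C * t) - Real.exp (-(A + B) * t)) / (A + B - C)
            + A * Real.exp (-(A + B) * t) := by
        rw [hg₁, hg₂]; field_simp; ring
      rw [key]
      have h2 : 0 ≤ A * Real.exp (-(A + B) * t) :=
        mul_nonneg hA.le (Real.exp_nonneg _)
      have h1 : 0 ≤ B * C * (Real.exp (-C * t) - Real.exp (-(A + B) * t)) / (A + B - C) := by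
        rcases lt_or_gt_of_ne hD with hneg | hpos
        · -- A + B < C, so exp(-C t) ≤ exp(-(A+B) t)
          have : Real.exp (-C * t) ≤ Real.exp (-(A + B) * t) := by
            apply Real.exp_le_exp.mpr
            nlinarith
          apply div_nonneg_iff.mpr
          right
          constructor
          · nlinarith [mul_pos hB hC]
          · linarith
        · have : Real.exp (-(A + B) * t) ≤ Real.exp (-C * t) := by
            apply Real.exp_le_exp.mpr
            nlinarith
          apply div_nonneg
          · nlinarith [mul_pos hB hC]
          · linarith
      linarith
    exact monotoneOn_of_deriv_nonneg (convex_Ici 0) (hdiff.continuous.continuousOn)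
      (fun t _ => (hdiff t).differentiableWithinAt) hnonneg
  · -- limit
    have hexp : ∀ c : ℝ, 0 < c → Tendsto (fun t : ℝ => Real.exp (-c * t)) atTop (nhds 0) := by
      intro c hc
      have h1 : Tendsto (fun t : ℝ => c * t) atTop atTop :=
        Tendsto.const_mul_atTop hc tendsto_id
      have := Real.tendsto_exp_neg_atTop_nhds_zero.comp h1
      simpa [Function.comp_def, neg_mul] using this
    rw [hp]
    have := ((tendsto_const_nhds (x := (1:ℝ))).sub
        (((hexp C hC).const_mul g₁))).add (((hexp (A + B) hS).const_mul g₂))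
    simpa using this
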